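/- Top-degree coefficient of f_{N,j,n} at b_1 = … = b_N = b: With f_{N,j,n} as defined via elementary symmetric polynomials, the limit as b → ∞ of f_{N,j,n}(b,…,b)/(1−b)^N equals q^{(N−j)(n−j)} [N choose j]_q for all integers j, n and N ≥ 0. Equivalently, the coefficient of (−b)^N in f_{N,j,n}(b,…,b) viewed as a polynomial in b is q^{(N−j)(n−j)} [N choose j]_q. -/

import Mathlib

/-- The q-Pochhammer symbol `(x;q)_k = ∏_{i=0}^{k-1} (1 - x q^i)`. -/
noncomputable def qp (q x : ℂ) (k : ℕ) : ℂ := ∏ i ∈ Finset.range k, (1 - x * q ^ i)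

/-- The Gaussian binomial coefficient `[N choose k]_q`, zero outside `0 ≤ k ≤ N`. -/
noncomputable def qbin (q : ℂ) (N k : ℤ) : ℂ :=
  if 0 ≤ k ∧ k ≤ N then qp q q N.toNat / (qp q q k.toNat * qp q q (N - k).toNat) else 0

/-- The M-th elementary symmetric polynomial in the variables `b 0, …, b (N-1)`. -/
noncomputable def esym (N M : ℕ) (b : ℕ → ℂ) : ℂ :=
  ∑ t ∈ (Finset.range N).powersetCard M, ∏ i ∈ t, b i

/-- The polynomial `f_{N,j,n}(b_1,…,b_N)`. -/
noncomputable def fpoly (a q : ℂ) (N : ℕ) (j n : ℤ) (b : ℕ → ℂ) : ℂ :=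
  ∑ M ∈ Finset.range (N + 1), ∑ u ∈ Finset.Icc (0 : ℤ) (N : ℤ),
    a ^ u * q ^ (((M : ℤ) - j + u) * (n - j + u) + u * (n - (N : ℤ))) *
      qbin q M (j - u) * qbin q ((N : ℤ) - M) u * (-1) ^ M * esym N M b

lemma esym_const (N M : ℕ) (b : ℂ) : esym N M (fun _ => b) = (N.choose M : ℂ) * b ^ M := by
  unfold esym
  rw [Finset.sum_congr rfl (fun t ht => by
    rw [Finset.prod_const, (Finset.mem_powersetCard.mp ht).2])]
  rw [Finset.sum_const, Finset.card_powersetCard, Finset.card_range, nsmul_eq_mul]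

/-- Auxiliary polynomial in `ε = (1-b)⁻¹`. -/
noncomputable def Gaux (a q : ℂ) (N : ℕ) (j n : ℤ) (ε : ℂ) : ℂ :=
  ∑ M ∈ Finset.range (N + 1), ∑ u ∈ Finset.Icc (0 : ℤ) (N : ℤ),
    a ^ u * q ^ (((M : ℤ) - j + u) * (n - j + u) + u * (n - (N : ℤ))) *
      qbin q M (j - u) * qbin q ((N : ℤ) - M) u * (-1) ^ M * (N.choose M : ℂ) *
      ((ε - 1) ^ M * ε ^ (N - M))

lemma Gaux_continuous (a q : ℂ) (N : ℕ) (j n : ℤ) : Continuous (Gaux a q N j n) := by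
  apply continuous_finset_sum
  intro M _
  apply continuous_finset_sum
  intro u _
  exact continuous_const.mul
    (((continuous_id.sub continuous_const).pow M).mul (continuous_id.pow (N - M)))

lemma qbin_zero (q : ℂ) (u : ℤ) : qbin q 0 u = if u = 0 then 1 else 0 := by
  unfold qbin qp
  rcases eq_or_ne u 0 with h | h
  · subst h; simp
  · simp only [if_neg h]
    rw [if_neg]
    rintro ⟨h1, h2⟩
    exact h (le_antisymm h2 h1)

lemma Gaux_zero (a q : ℂ) (N : ℕ) (j n : ℤ) :
    Gaux a q N j n 0 = q ^ (((N : ℤ) - j) * (n - j)) * qbin q N j := by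
  unfold Gaux
  rw [Finset.sum_eq_single N]
  · rw [Finset.sum_eq_single (0 : ℤ)]
    · have h0 : ((N : ℤ) - N) = 0 := by ring
      rw [h0, qbin_zero]
      simp only [if_pos rfl, zero_sub, Nat.sub_self, pow_zero, mul_one, zpow_zero,
        sub_zero, add_zero, zero_mul, Nat.choose_self, Nat.cast_one, one_mul]
      simp only [if_true, mul_one]
      have h4 : ((-1 : ℂ)) ^ N * (-1 : ℂ) ^ N = 1 := by
        rw [← mul_pow]; norm_num
      linear_combination (q ^ (((N : ℤ) - j) * (n - j)) * qbin q (N : ℤ) j) * h4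
    · intro u hu hu0
      have h0 : ((N : ℤ) - N) = 0 := by ring
      rw [h0, qbin_zero, if_neg hu0]
      ring
    · intro h
      exact absurd (Finset.mem_Icc.mpr ⟨le_refl 0, Int.natCast_nonneg N⟩) h
  · intro M hM hMN
    have hMle : M ≤ N := Nat.lt_succ_iff.mp (Finset.mem_range.mp hM)
    have : (0 : ℂ) ^ (N - M) = 0 := zero_pow (Nat.sub_ne_zero_of_lt (lt_of_le_of_ne hMle hMN))
    apply Finset.sum_eq_zero
    intro u _
    rw [this]
    ring
  · intro h
    exact absurd (Finset.self_mem_range_succ N) h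

theorem fpoly_top_coeff (a q : ℂ) (hq : q ≠ 0) (N : ℕ) (j n : ℤ) :
    Filter.Tendsto
      (fun b : ℝ => fpoly a q N j n (fun _ => (b : ℂ)) / (1 - (b : ℂ)) ^ N)
      Filter.atTop
      (nhds (q ^ (((N : ℤ) - j) * (n - j)) * qbin q N j)) := by
  have h1 : Filter.Tendsto (fun b : ℝ => (1 - (b : ℂ))⁻¹) Filter.atTop (nhds 0) := by
    have hb : Filter.Tendsto (fun b : ℝ => (1 - b)⁻¹) Filter.atTop (nhds 0) := by
      have h := tendsto_inv_atTop_zero.comp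
        (Filter.tendsto_atTop_add_const_right Filter.atTop (-1 : ℝ) Filter.tendsto_id)
      have h2 := h.neg
      rw [neg_zero] at h2
      refine h2.congr fun b => ?_
      show -((b + -1)⁻¹) = (1 - b)⁻¹
      rw [← inv_neg]
      congr 1
      ring
    have := (Complex.continuous_ofReal.tendsto 0).comp hb
    refine this.congr fun b => ?_
    simp
  have h2 := ((Gaux_continuous a q N j n).tendsto 0).comp h1
  rw [Gaux_zero] at h2
  apply h2.congr'
  filter_upwards [Filter.eventually_ge_atTop (2 : ℝ)] with b hb
  have hne : (1 : ℂ) - (b : ℂ) ≠ 0 := by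
    intro h
    have : (b : ℂ) = 1 := by linear_combination -h
    rw [Complex.ofReal_eq_one] at this
    linarith
  have hε : ((1 - (b : ℂ))⁻¹ - 1) = (b : ℂ) * (1 - (b : ℂ))⁻¹ := by
    field_simp
    ring
  show Gaux a q N j n ((1 - (b : ℂ))⁻¹) = fpoly a q N j n (fun _ => (b : ℂ)) / (1 - (b : ℂ)) ^ N
  unfold Gaux fpoly
  rw [Finset.sum_div]
  apply Finset.sum_congr rfl
  intro M hM
  have hMle : M ≤ N := Nat.lt_succ_iff.mp (Finset.mem_range.mp hM)
  rw [Finset.sum_div]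
  apply Finset.sum_congr rfl
  intro u _
  rw [esym_const, hε, mul_pow]
  have hpow : ((1 - (b : ℂ))⁻¹) ^ M * ((1 - (b : ℂ))⁻¹) ^ (N - M) = ((1 - (b : ℂ)) ^ N)⁻¹ := by
    rw [← pow_add, Nat.add_sub_cancel' hMle, inv_pow]
  rw [div_eq_mul_inv, ← hpow]
  ring
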